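/- There exists a universal constant C > 0 with the following property. Let n ≥ 2, let the attacker's utility at target t ∈ {1,…,n} be the linear function u_t(p) = w_t·p + c_t with the normalization c_n = 0, and for a defender strategy x ∈ [0,1]^n let D^x(t) = exp(u_t(x_t)) / Σ_{i=1}^n exp(u_i(x_i)) denote the attacker's quantal response distribution. Let ρ, λ, ν, ε, δ ∈ (0,1) and let x, y, z ∈ [0,1]^n be three strategies such that (i) for every t < n, |(x_t − y_t)(x_n − z_n) − (x_n − y_n)(x_t − z_t)| ≥ λ, and (ii) for every two distinct strategies p, q among {x, y, z} and every t, |p_t − q_t| ≥ ν. Then for every m ≥ C·(1/ρ)·(1/(ε·ν·λ))²·log(n/δ) there exists an estimator (a function, depending only on n, x, y, z, m, mapping the three m-tuples of observed attacked targets to linear functions û_1, …, û_n on [0,1]) such that: for every choice of coefficients (w_t, c_t) with c_n = 0 whose induced distributions satisfy D^x(t) ≥ ρ, D^y(t) ≥ ρ, D^z(t) ≥ ρ for all t, with probability at least 1 − δ over m i.i.d. attacks drawn from each of D^x, D^y, D^z, there exists c ∈ ℝ such that |û_t(p) + c − u_t(p)| ≤ ε for all t ∈ {1,…,n} and all p ∈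 [0,1]. -/

import Mathlib

open MeasureTheory

/-- The quantal response distribution of an attacker with linear utilities
`u_t(p) = w t * p + c t` facing defender strategy `xv`. -/
noncomputable def quantalResp (n : ℕ) (w c xv : Fin n → ℝ) (t : Fin n) : ℝ :=
  Real.exp (w t * xv t + c t) / ∑ i, Real.exp (w i * xv i + c i)

theorem quantalResp_sum (n : ℕ) (hn : 0 < n) (w c xv : Fin n → ℝ) :
    ∑ t, ENNReal.ofReal (quantalResp n w c xv t) = 1 := by
  haveI : Nonempty (Fin n) := Fin.pos_iff_nonempty.mp hn
  have hpos : (0:ℝ) < ∑ i, Real.exp (w i * xv i + c i) :=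
    Finset.sum_pos (fun i _ => Real.exp_pos _) Finset.univ_nonempty
  have h1 : ∑ t, quantalResp n w c xv t = 1 := by
    unfold quantalResp
    rw [← Finset.sum_div, div_self hpos.ne']
  rw [← ENNReal.ofReal_sum_of_nonneg fun t _ => by unfold quantalResp; positivity,
    h1, ENNReal.ofReal_one]

/-- The quantal response distribution as a probability mass function. -/
noncomputable def quantalPMF (n : ℕ) (hn : 0 < n) (w c xv : Fin n → ℝ) : PMF (Fin n) :=
  PMF.ofFintype (fun t => ENNReal.ofReal (quantalResp n w c xv t))
    (quantalResp_sum n hn w c xv)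

/-- The distribution of `m` i.i.d. attacks drawn from the quantal response to
strategy `xv`. -/
noncomputable def sampleMeasure (n m : ℕ) (hn : 0 < n) (w c xv : Fin n → ℝ) :
    Measure (Fin m → Fin n) :=
  Measure.pi fun _ : Fin m => (quantalPMF n hn w c xv).toMeasure

/-! ### Auxiliary finite-probability machinery -/

/-- product weight of a sample -/
noncomputable def Wt {n : ℕ} (p : Fin n → ℝ) (m : ℕ) (s : Fin m → Fin n) : ℝ :=
  ∏ i, p (s i)

/-- number of occurrences of `t` in the sample `s` -/
def cnt {n m : ℕ} (s : Fin m → Fin n) (t : Fin n) : ℕ :=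
  (Finset.univ.filter fun i => s i = t).card

lemma Wt_nonneg {n : ℕ} {p : Fin n → ℝ} (hp : ∀ v, 0 ≤ p v) (m : ℕ)
    (s : Fin m → Fin n) : 0 ≤ Wt p m s :=
  Finset.prod_nonneg fun i _ => hp (s i)

lemma sum_Wt {n : ℕ} (p : Fin n → ℝ) (hps : ∑ v, p v = 1) (m : ℕ) :
    ∑ s : Fin m → Fin n, Wt p m s = 1 := by
  unfold Wt
  rw [← Fintype.sum_pow p m, hps, one_pow]

lemma exp_le_quad {u : ℝ} (hu : |u| ≤ 1/2) : Real.exp u ≤ 1 + u + 2*u^2 := by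
  rcases abs_le.1 hu with ⟨h1, h2⟩
  have h3 : (0:ℝ) < 1 - u := by linarith
  have h4 : 1 - u ≤ Real.exp (-u) := by linarith [Real.add_one_le_exp (-u)]
  have h5 : Real.exp u = (Real.exp (-u))⁻¹ := by
    rw [← Real.exp_neg, neg_neg]
  rw [h5]
  have h6 : (Real.exp (-u))⁻¹ ≤ (1 - u)⁻¹ := by
    apply inv_anti₀ h3 h4
  refine h6.trans ?_
  rw [inv_le_iff_one_le_mul₀ h3]
  nlinarith

lemma sum_ite_calc {n : ℕ} (p : Fin n → ℝ) (hps : ∑ v, p v = 1) (t : Fin n) (u : ℝ) :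
    ∑ v, p v * Real.exp (u * ((if v = t then (1:ℝ) else 0) - p t))
      = Real.exp (-(u * p t)) * (1 + p t * (Real.exp u - 1)) := by
  classical
  have h1 : ∀ v, p v * Real.exp (u * ((if v = t then (1:ℝ) else 0) - p t))
      = Real.exp (-(u * p t)) * (p v + if v = t then p v * (Real.exp u - 1) else 0) := by
    intro v
    split_ifs with h
    · rw [show u * ((1:ℝ) - p t) = -(u * p t) + u by ring, Real.exp_add]; ring
    · rw [show u * ((0:ℝ) - p t) = -(u * p t) by ring]; ring
  rw [Finset.sum_congr rfl fun v _ => h1 v, ← Finset.mul_sum]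
  congr 1
  rw [Finset.sum_add_distrib, hps, Finset.sum_ite_eq' Finset.univ t
    (fun v => p v * (Real.exp u - 1))]
  simp

lemma chernoff_one {n : ℕ} (p : Fin n → ℝ) (hp0 : ∀ v, 0 ≤ p v) (hps : ∑ v, p v = 1)
    (t : Fin n) (m : ℕ) (u a : ℝ) (hu : |u| ≤ 1/2) :
    ∑ s ∈ Finset.univ.filter
        (fun s : Fin m → Fin n => a ≤ u * ((cnt s t : ℝ) - m * p t)), Wt p m s
      ≤ Real.exp (-a + 2 * m * p t * u^2) := by
  classical
  have hq0 : 0 ≤ p t := hp0 t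
  -- the moment generating function bound
  have hM : ∑ v, p v * Real.exp (u * ((if v = t then (1:ℝ) else 0) - p t))
      ≤ Real.exp (2 * p t * u^2) := by
    rw [sum_ite_calc p hps t u]
    have h2 : 1 + p t * (Real.exp u - 1) ≤ Real.exp (p t * (u + 2*u^2)) := by
      have h3 : Real.exp u - 1 ≤ u + 2*u^2 := by linarith [exp_le_quad hu]
      have h4 : p t * (Real.exp u - 1) ≤ p t * (u + 2*u^2) :=
        mul_le_mul_of_nonneg_left h3 hq0
      linarith [Real.add_one_le_exp (p t * (u + 2*u^2))]
    calc Real.exp (-(u * p t)) * (1 + p t * (Real.exp u - 1))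
        ≤ Real.exp (-(u * p t)) * Real.exp (p t * (u + 2*u^2)) :=
          mul_le_mul_of_nonneg_left h2 (Real.exp_nonneg _)
      _ = Real.exp (2 * p t * u^2) := by rw [← Real.exp_add]; ring_nf
  have hMnn : 0 ≤ ∑ v, p v * Real.exp (u * ((if v = t then (1:ℝ) else 0) - p t)) :=
    Finset.sum_nonneg fun v _ => mul_nonneg (hp0 v) (Real.exp_nonneg _)
  -- factorization of the weighted exponential sum
  have key : ∀ s : Fin m → Fin n,
      Wt p m s * Real.exp (u * ((cnt s t : ℝ) - m * p t)) =
        ∏ i, (p (s i) * Real.exp (u * ((if s i = t then (1:ℝ) else 0) - p t))) := by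
    intro s
    rw [Finset.prod_mul_distrib, ← Real.exp_sum]
    unfold Wt
    congr 2
    rw [← Finset.mul_sum]
    congr 1
    have : ∑ i : Fin m, ((if s i = t then (1:ℝ) else 0) - p t)
        = (cnt s t : ℝ) - m * p t := by
      rw [Finset.sum_sub_distrib, Finset.sum_boole, Finset.sum_const, Finset.card_univ,
        Fintype.card_fin, nsmul_eq_mul, cnt]
    rw [this]
  calc ∑ s ∈ Finset.univ.filter
        (fun s : Fin m → Fin n => a ≤ u * ((cnt s t : ℝ) - m * p t)), Wt p m s
      ≤ ∑ s ∈ Finset.univ.filter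
        (fun s : Fin m → Fin n => a ≤ u * ((cnt s t : ℝ) - m * p t)),
          Wt p m s * (Real.exp (-a) * Real.exp (u * ((cnt s t : ℝ) - m * p t))) := by
        apply Finset.sum_le_sum
        intro s hs
        have h := (Finset.mem_filter.1 hs).2
        have h2 : (1:ℝ) ≤ Real.exp (-a) * Real.exp (u * ((cnt s t : ℝ) - m * p t)) := by
          rw [← Real.exp_add]
          exact Real.one_le_exp (by linarith)
        nlinarith [Wt_nonneg hp0 m s]
    _ ≤ ∑ s : Fin m → Fin n,
          Wt p m s * (Real.exp (-a) * Real.exp (u * ((cnt s t : ℝ) - m * p t))) := by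
        apply Finset.sum_le_sum_of_subset_of_nonneg (Finset.filter_subset _ _)
        intro s _ _
        exact mul_nonneg (Wt_nonneg hp0 m s)
          (mul_nonneg (Real.exp_nonneg _) (Real.exp_nonneg _))
    _ = Real.exp (-a) * ∑ s : Fin m → Fin n,
          Wt p m s * Real.exp (u * ((cnt s t : ℝ) - m * p t)) := by
        rw [Finset.mul_sum]; apply Finset.sum_congr rfl; intro s _; ring
    _ = Real.exp (-a) *
        (∑ v, p v * Real.exp (u * ((if v = t then (1:ℝ) else 0) - p t)))^m := by
        rw [Finset.sum_congr rfl fun s _ => key s,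
          ← Fintype.sum_pow (fun v => p v * Real.exp (u * ((if v = t then (1:ℝ) else 0) - p t))) m]
    _ ≤ Real.exp (-a) * (Real.exp (2 * p t * u^2))^m := by
        apply mul_le_mul_of_nonneg_left _ (Real.exp_nonneg _)
        exact pow_le_pow_left₀ hMnn hM m
    _ = Real.exp (-a + 2 * m * p t * u^2) := by
        rw [← Real.exp_nat_mul, ← Real.exp_add]; ring_nf

lemma chernoff_two {n : ℕ} (p : Fin n → ℝ) (hp0 : ∀ v, 0 ≤ p v) (hps : ∑ v, p v = 1)
    (t : Fin n) (m : ℕ) (η : ℝ) (hη : 0 < η) (hη2 : η ≤ 1/2) :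
    ∑ s ∈ Finset.univ.filter
        (fun s : Fin m → Fin n => ¬ |(cnt s t : ℝ) - m * p t| ≤ η * (m * p t)), Wt p m s
      ≤ 2 * Real.exp (-(m * p t * η^2)/8) := by
  classical
  have hq0 : 0 ≤ p t := hp0 t
  have hmq : 0 ≤ (m:ℝ) * p t := by positivity
  set a := (η/4) * (η * (m * p t)) with ha
  have h1 := chernoff_one p hp0 hps t m (η/4) a (by rw [abs_of_nonneg (by linarith)]; linarith)
  have h2 := chernoff_one p hp0 hps t m (-(η/4)) a
    (by rw [abs_neg, abs_of_nonneg (by linarith)]; linarith)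
  have hsplit : ∑ s ∈ Finset.univ.filter
        (fun s : Fin m → Fin n => ¬ |(cnt s t : ℝ) - m * p t| ≤ η * (m * p t)), Wt p m s
      ≤ (∑ s ∈ Finset.univ.filter
          (fun s : Fin m → Fin n => a ≤ (η/4) * ((cnt s t : ℝ) - m * p t)), Wt p m s)
        + ∑ s ∈ Finset.univ.filter
          (fun s : Fin m → Fin n => a ≤ (-(η/4)) * ((cnt s t : ℝ) - m * p t)), Wt p m s := by
    calc ∑ s ∈ Finset.univ.filter
          (fun s : Fin m → Fin n => ¬ |(cnt s t : ℝ) - m * p t| ≤ η * (m * p t)), Wt p m s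
        ≤ ∑ s ∈ Finset.univ.filter
          (fun s : Fin m → Fin n => ¬ |(cnt s t : ℝ) - m * p t| ≤ η * (m * p t)),
            ((if a ≤ (η/4) * ((cnt s t : ℝ) - m * p t) then Wt p m s else 0)
              + (if a ≤ (-(η/4)) * ((cnt s t : ℝ) - m * p t) then Wt p m s else 0)) := by
          apply Finset.sum_le_sum
          intro s hs
          have h := (Finset.mem_filter.1 hs).2
          rw [not_le] at h
          have hW := Wt_nonneg hp0 m s
          rcases lt_abs.1 h with h | h
          · have hc1 : a ≤ (η/4) * ((cnt s t : ℝ) - m * p t) := by nlinarith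
            rw [if_pos hc1]
            split_ifs with h' <;> linarith
          · have hc2 : a ≤ (-(η/4)) * ((cnt s t : ℝ) - m * p t) := by nlinarith
            rw [if_pos hc2]
            split_ifs with h' <;> linarith
      _ ≤ ∑ s : Fin m → Fin n,
            ((if a ≤ (η/4) * ((cnt s t : ℝ) - m * p t) then Wt p m s else 0)
              + (if a ≤ (-(η/4)) * ((cnt s t : ℝ) - m * p t) then Wt p m s else 0)) := by
          apply Finset.sum_le_sum_of_subset_of_nonneg (Finset.filter_subset _ _)
          intro s _ _
          have hW := Wt_nonneg hp0 m s
          split_ifs <;> simp <;> linarith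
      _ = _ := by
          rw [Finset.sum_add_distrib, ← Finset.sum_filter, ← Finset.sum_filter]
  refine hsplit.trans ?_
  refine (add_le_add h1 h2).trans ?_
  have e1 : -a + 2 * m * p t * (η/4)^2 = -(m * p t * η^2)/8 := by rw [ha]; ring
  have e2 : -a + 2 * m * p t * (-(η/4))^2 = -(m * p t * η^2)/8 := by rw [ha]; ring
  rw [e1, e2]; ring_nf; rfl

lemma good_bound {n : ℕ} (p : Fin n → ℝ) (hp0 : ∀ v, 0 ≤ p v) (hps : ∑ v, p v = 1)
    (m : ℕ) (η δ' : ℝ) (hη : 0 < η) (hη2 : η ≤ 1/2) (hn0 : 0 < n)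
    (hsmall : ∀ t, 2 * Real.exp (-(m * p t * η^2)/8) ≤ δ' / n) :
    1 - δ' ≤ ∑ s ∈ Finset.univ.filter
        (fun s : Fin m → Fin n => ∀ t, |(cnt s t : ℝ) - m * p t| ≤ η * (m * p t)),
      Wt p m s := by
  classical
  have htot := sum_Wt p hps m
  have hsplit := Finset.sum_filter_add_sum_filter_not Finset.univ
    (fun s : Fin m → Fin n => ∀ t, |(cnt s t : ℝ) - m * p t| ≤ η * (m * p t)) (Wt p m)
  have hbad : ∑ s ∈ Finset.univ.filter
      (fun s : Fin m → Fin n => ¬ ∀ t, |(cnt s t : ℝ) - m * p t| ≤ η * (m * p t)),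
      Wt p m s ≤ δ' := by
    calc ∑ s ∈ Finset.univ.filter
          (fun s : Fin m → Fin n => ¬ ∀ t, |(cnt s t : ℝ) - m * p t| ≤ η * (m * p t)),
          Wt p m s
        ≤ ∑ s ∈ Finset.univ.filter
          (fun s : Fin m → Fin n => ¬ ∀ t, |(cnt s t : ℝ) - m * p t| ≤ η * (m * p t)),
          ∑ t, (if ¬ |(cnt s t : ℝ) - m * p t| ≤ η * (m * p t) then Wt p m s else 0) := by
          apply Finset.sum_le_sum
          intro s hs
          obtain ⟨t, ht⟩ := not_forall.1 (Finset.mem_filter.1 hs).2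
          calc Wt p m s
              = (if ¬ |(cnt s t : ℝ) - m * p t| ≤ η * (m * p t) then Wt p m s else 0) :=
                (if_pos ht).symm
            _ ≤ _ := Finset.single_le_sum (f := fun t =>
                  (if ¬ |(cnt s t : ℝ) - m * p t| ≤ η * (m * p t) then Wt p m s else 0))
                (fun t _ => by
                  split_ifs <;> first | exact le_rfl | exact Wt_nonneg hp0 m s)
                (Finset.mem_univ t)
      _ ≤ ∑ s : Fin m → Fin n,
          ∑ t, (if ¬ |(cnt s t : ℝ) - m * p t| ≤ η * (m * p t) then Wt p m s else 0) := by
          apply Finset.sum_le_sum_of_subset_of_nonneg (Finset.filter_subset _ _)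
          intro s _ _
          apply Finset.sum_nonneg
          intro t _
          split_ifs <;> first | exact le_rfl | exact Wt_nonneg hp0 m s
      _ = ∑ t, ∑ s : Fin m → Fin n,
          (if ¬ |(cnt s t : ℝ) - m * p t| ≤ η * (m * p t) then Wt p m s else 0) :=
          Finset.sum_comm
      _ = ∑ t : Fin n, ∑ s ∈ Finset.univ.filter
          (fun s : Fin m → Fin n => ¬ |(cnt s t : ℝ) - m * p t| ≤ η * (m * p t)),
          Wt p m s := by
          exact Finset.sum_congr rfl fun t _ => (Finset.sum_filter _ _).symm
      _ ≤ ∑ _t : Fin n, δ' / n := by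
          apply Finset.sum_le_sum
          intro t _
          exact (chernoff_two p hp0 hps t m η hη hη2).trans (hsmall t)
      _ = δ' := by
          rw [Finset.sum_const, Finset.card_univ, Fintype.card_fin, nsmul_eq_mul]
          field_simp
  linarith

lemma log_close {f q η : ℝ} (hq : 0 < q) (hη : 0 < η) (hη2 : η ≤ 1/2)
    (h : |f - q| ≤ η * q) : |Real.log f - Real.log q| ≤ 2 * η := by
  rcases abs_le.1 h with ⟨h1, h2⟩
  have hf0 : 0 < f := by nlinarith
  rw [← Real.log_div hf0.ne' hq.ne', abs_le]
  constructor
  · have h3 : Real.log (q / f) ≤ q/f - 1 := Real.log_le_sub_one_of_pos (by positivity)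
    have h4 : Real.log (f/q) = - Real.log (q/f) := by
      rw [← Real.log_inv]
      congr 1
      field_simp
    have h5 : q/f - 1 ≤ 2*η := by
      rw [sub_le_iff_le_add, div_le_iff₀ hf0]
      nlinarith
    rw [h4]
    linarith
  · have h3 : Real.log (f/q) ≤ f/q - 1 := Real.log_le_sub_one_of_pos (by positivity)
    have h5 : f/q - 1 ≤ 2*η := by
      rw [sub_le_iff_le_add, div_le_iff₀ hq]
      nlinarith
    linarith

lemma solve2_err {a A b B X Y d w lam η : ℝ} (hd : lam ≤ |d|) (hlam : 0 < lam)
    (hw : w * d = A * X - B * Y)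
    (ha : |a - A| ≤ 8*η) (hb : |b - B| ≤ 8*η) (hX : |X| ≤ 1) (hY : |Y| ≤ 1) (hη : 0 ≤ η) :
    |(a * X - b * Y)/d - w| ≤ 16*η/lam := by
  have hd0 : d ≠ 0 := by intro h; rw [h, abs_zero] at hd; linarith
  have he : (a * X - b * Y)/d - w = ((a - A)*X - (b - B)*Y)/d := by
    field_simp
    linear_combination -hw
  rw [he, abs_div]
  have hnum : |(a - A)*X - (b - B)*Y| ≤ 16*η := by
    calc |(a - A)*X - (b - B)*Y| ≤ |(a - A)*X| + |(b - B)*Y| := abs_sub _ _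
      _ = |a - A| * |X| + |b - B| * |Y| := by rw [abs_mul, abs_mul]
      _ ≤ 8*η*1 + 8*η*1 := add_le_add
          (mul_le_mul ha hX (abs_nonneg _) (by linarith))
          (mul_le_mul hb hY (abs_nonneg _) (by linarith))
      _ = 16*η := by ring
  exact div_le_div₀ (by positivity) hnum hlam hd

lemma qr_nonneg (n : ℕ) (w c xv : Fin n → ℝ) (t : Fin n) :
    0 ≤ quantalResp n w c xv t := by
  unfold quantalResp
  positivity

lemma qr_sum_one (n : ℕ) (hn : 0 < n) (w c xv : Fin n → ℝ) :
    ∑ t, quantalResp n w c xv t = 1 := by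
  haveI : Nonempty (Fin n) := Fin.pos_iff_nonempty.mp hn
  have hpos : (0:ℝ) < ∑ i, Real.exp (w i * xv i + c i) :=
    Finset.sum_pos (fun i _ => Real.exp_pos _) Finset.univ_nonempty
  unfold quantalResp
  rw [← Finset.sum_div, div_self hpos.ne']

lemma qr_log (n : ℕ) (hn : 0 < n) (w c xv : Fin n → ℝ) (t : Fin n) :
    Real.log (quantalResp n w c xv t)
      = (w t * xv t + c t) - Real.log (∑ i, Real.exp (w i * xv i + c i)) := by
  haveI : Nonempty (Fin n) := Fin.pos_iff_nonempty.mp hn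
  have hpos : (0:ℝ) < ∑ i, Real.exp (w i * xv i + c i) :=
    Finset.sum_pos (fun i _ => Real.exp_pos _) Finset.univ_nonempty
  unfold quantalResp
  rw [Real.log_div (Real.exp_ne_zero _) hpos.ne', Real.log_exp]

lemma sampleMeasure_apply (n m : ℕ) (hn : 0 < n) (w c xv : Fin n → ℝ)
    (P : (Fin m → Fin n) → Prop) [DecidablePred P] :
    sampleMeasure n m hn w c xv {s | P s}
      = ENNReal.ofReal (∑ s ∈ Finset.univ.filter P, Wt (quantalResp n w c xv) m s) := by
  classical
  have hnn : ∀ v, 0 ≤ quantalResp n w c xv v := qr_nonneg n w c xv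
  have hsingle : ∀ s0 : Fin m → Fin n,
      sampleMeasure n m hn w c xv {s0} = ENNReal.ofReal (Wt (quantalResp n w c xv) m s0) := by
    intro s0
    unfold sampleMeasure
    rw [← Set.univ_pi_singleton s0, Measure.pi_pi]
    have h1 : ∀ i : Fin m, (quantalPMF n hn w c xv).toMeasure {s0 i}
        = ENNReal.ofReal (quantalResp n w c xv (s0 i)) := by
      intro i
      rw [PMF.toMeasure_apply_singleton _ _ (measurableSet_singleton _)]
      rfl
    rw [Finset.prod_congr rfl fun i _ => h1 i,
      ← ENNReal.ofReal_prod_of_nonneg (fun i _ => hnn (s0 i))]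
    rfl
  have hset : {s | P s} = ⋃ s0 ∈ (Finset.univ.filter P : Finset (Fin m → Fin n)),
      ({s0} : Set (Fin m → Fin n)) := by
    ext r
    simp
  rw [hset, measure_biUnion_finset ?_ ?_]
  · rw [Finset.sum_congr rfl fun s0 _ => hsingle s0,
      ← ENNReal.ofReal_sum_of_nonneg (fun s0 _ => Wt_nonneg hnn m s0)]
  · intro a _ b _ hab
    exact Set.disjoint_singleton.2 hab
  · intro s0 _
    exact measurableSet_singleton _

/-- estimated log-probability-ratio relative to the last target -/
noncomputable def Lest {n m : ℕ} (l : Fin n) (s : Fin m → Fin n) (j : Fin n) : ℝ :=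
  Real.log ((cnt s j : ℝ) / m) - Real.log ((cnt s l : ℝ) / m)

/-- estimator for the slope `w j` -/
noncomputable def estW {n m : ℕ} (x y z : Fin n → ℝ) (l : Fin n)
    (sx sy sz : Fin m → Fin n) (j : Fin n) : ℝ :=
  ((Lest l sx j - Lest l sy j) * (x l - z l) - (Lest l sx j - Lest l sz j) * (x l - y l)) /
    ((x j - y j) * (x l - z l) - (x l - y l) * (x j - z j))

/-- estimator for the slope of the last target -/
noncomputable def estWl {n m : ℕ} (x y z : Fin n → ℝ) (l t0 : Fin n)
    (sx sy sz : Fin m → Fin n) : ℝ :=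
  ((Lest l sx t0 - Lest l sy t0) * (x t0 - z t0) -
      (Lest l sx t0 - Lest l sz t0) * (x t0 - y t0)) /
    ((x t0 - y t0) * (x l - z l) - (x l - y l) * (x t0 - z t0))

/-- the full estimator -/
noncomputable def estF (n m : ℕ) (x y z : Fin n → ℝ) (l t0 : Fin n)
    (sx sy sz : Fin m → Fin n) (t : Fin n) : ℝ × ℝ :=
  if (t : ℕ) + 1 < n then
    (estW x y z l sx sy sz t,
      Lest l sx t - estW x y z l sx sy sz t * x t + estWl x y z l t0 sx sy sz * x l)
  else (estWl x y z l t0 sx sy sz, 0)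
/-- Learning linear attacker utilities from quantal responses to three suitably
separated strategies: there is a universal constant `C > 0` such that with
`m ≥ C·(1/ρ)·(1/(ε·ν·λ))²·log(n/δ)` samples from each of the three induced attack
distributions, an estimator (depending only on `n, x, y, z, m`) recovers, with
probability at least `1 − δ`, every utility `u_t(p) = w t * p + c t` up to a common
additive shift within uniform error `ε` on `[0,1]`. -/
theorem learn_linear_utilities_from_three_strategies :
    ∃ C : ℝ, 0 < C ∧
      ∀ (n : ℕ) (hn : 2 ≤ n) (x y z : Fin n → ℝ),
        (∀ t, x t ∈ Set.Icc (0:ℝ) 1) →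
        (∀ t, y t ∈ Set.Icc (0:ℝ) 1) →
        (∀ t, z t ∈ Set.Icc (0:ℝ) 1) →
        ∀ ρ lam ν ε δ : ℝ,
          ρ ∈ Set.Ioo (0:ℝ) 1 → lam ∈ Set.Ioo (0:ℝ) 1 → ν ∈ Set.Ioo (0:ℝ) 1 →
          ε ∈ Set.Ioo (0:ℝ) 1 → δ ∈ Set.Ioo (0:ℝ) 1 →
          (∀ t : Fin n, (t : ℕ) + 1 < n →
            lam ≤ |(x t - y t) * (x ⟨n-1, by omega⟩ - z ⟨n-1, by omega⟩) -
              (x ⟨n-1, by omega⟩ - y ⟨n-1, by omega⟩) * (x t - z t)|) →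
          (∀ t : Fin n, ν ≤ |x t - y t| ∧ ν ≤ |x t - z t| ∧ ν ≤ |y t - z t|) →
          ∀ m : ℕ, C * (1/ρ) * (1/(ε * ν * lam))^2 * Real.log (n/δ) ≤ (m : ℝ) →
            ∃ est : (Fin m → Fin n) → (Fin m → Fin n) → (Fin m → Fin n) →
                Fin n → ℝ × ℝ,
              ∀ w c : Fin n → ℝ, c ⟨n-1, by omega⟩ = 0 →
                (∀ t, ρ ≤ quantalResp n w c x t) →
                (∀ t, ρ ≤ quantalResp n w c y t) →
                (∀ t, ρ ≤ quantalResp n w c z t) →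
                ENNReal.ofReal (1 - δ) ≤
                  ((sampleMeasure n m (by omega) w c x).prod
                    ((sampleMeasure n m (by omega) w c y).prod
                      (sampleMeasure n m (by omega) w c z)))
                  {s : (Fin m → Fin n) × ((Fin m → Fin n) × (Fin m → Fin n)) |
                    ∃ cs : ℝ, ∀ t : Fin n, ∀ p ∈ Set.Icc (0:ℝ) 1,
                      |((est s.1 s.2.1 s.2.2 t).1 * p + (est s.1 s.2.1 s.2.2 t).2)
                        + cs - (w t * p + c t)| ≤ ε} := by
  classical
  refine ⟨100000, by norm_num, ?_⟩
  intro n hn x y z hx hy hz ρ lam ν ε δ hρ hlam hν hε hδ hdet hsep m hm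
  have h0n : 0 < n := by omega
  have hln : n - 1 < n := by omega
  have h0ln : 0 < n := h0n
  obtain ⟨hρ0, hρ1⟩ := hρ
  obtain ⟨hlam0, hlam1⟩ := hlam
  obtain ⟨hν0, hν1⟩ := hν
  obtain ⟨hε0, hε1⟩ := hε
  obtain ⟨hδ0, hδ1⟩ := hδ
  obtain ⟨l, hl⟩ : ∃ l : Fin n, l = ⟨n - 1, hln⟩ := ⟨_, rfl⟩
  obtain ⟨t0, ht0⟩ : ∃ t : Fin n, t = ⟨0, h0n⟩ := ⟨_, rfl⟩
  obtain ⟨η, hηd⟩ : ∃ e : ℝ, e = ε * ν * lam / 52 := ⟨_, rfl⟩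
  have hK0 : (0:ℝ) < ε * ν * lam := by positivity
  have hη0 : 0 < η := by rw [hηd]; positivity
  have hη12 : η ≤ 1/2 := by
    rw [hηd]
    have h1 : ε * ν ≤ 1 := by nlinarith only [hε0, hε1, hν0, hν1]
    have h2 : ε * ν * lam ≤ 1 := by nlinarith only [h1, hlam0, hlam1, mul_pos hε0 hν0]
    linarith only [h2]
  -- basic numeric facts
  have hnR : (0:ℝ) < n := by exact_mod_cast h0n
  have hn2R : (2:ℝ) ≤ n := by exact_mod_cast hn
  have hnd2 : (2:ℝ) ≤ (n:ℝ)/δ := by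
    rw [le_div_iff₀ hδ0]
    nlinarith only [hδ0, hδ1, hn2R]
  have hLpos : 0 < Real.log ((n:ℝ)/δ) := Real.log_pos (by linarith)
  have hmR : (0:ℝ) < m := by
    have hc : 0 < 100000 * (1/ρ) * (1/(ε*ν*lam))^2 * Real.log ((n:ℝ)/δ) := by positivity
    linarith only [hm, hc]
  have h6n : (0:ℝ) < 6*(n:ℝ)/δ := by
    apply div_pos (by linarith) hδ0
  have h6 : Real.log (6*(n:ℝ)/δ) ≤ 4 * Real.log ((n:ℝ)/δ) := by
    have e : 6*(n:ℝ)/δ = 6 * ((n:ℝ)/δ) := by ring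
    rw [e, Real.log_mul (by norm_num) (by linarith)]
    have h8 : Real.log 6 ≤ 3 * Real.log 2 := by
      rw [show (3:ℝ)*Real.log 2 = Real.log (2^3) by rw [Real.log_pow]; push_cast; ring]
      exact Real.log_le_log (by norm_num) (by norm_num)
    have h9 : Real.log 2 ≤ Real.log ((n:ℝ)/δ) := Real.log_le_log (by norm_num) hnd2
    linarith
  have hmb : 4 * Real.log ((n:ℝ)/δ) ≤ (m:ℝ) * ρ * η^2 / 8 := by
    have e1 : (100000 * (1/ρ) * (1/(ε*ν*lam))^2 * Real.log ((n:ℝ)/δ)) * (ρ * η^2/8)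
        = (100000/21632) * Real.log ((n:ℝ)/δ) := by
      rw [hηd]
      field_simp
      ring
    have e2 := mul_le_mul_of_nonneg_right hm (le_of_lt (show (0:ℝ) < ρ*η^2/8 by positivity))
    rw [e1] at e2
    have e3 : (m:ℝ) * (ρ*η^2/8) = (m:ℝ) * ρ * η^2 / 8 := by ring
    rw [e3] at e2
    nlinarith only [e2, hLpos]
  have hkey : Real.log (6*(n:ℝ)/δ) ≤ (m:ℝ) * ρ * η^2 / 8 := le_trans h6 hmb
  -- the estimator
  refine ⟨estF n m x y z l t0, ?_⟩
  intro w c hc hρx hρy hρz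
  have hc' : c l = 0 := by rw [hl]; exact hc
  have hdet' : ∀ j : Fin n, (j:ℕ) + 1 < n →
      lam ≤ |(x j - y j) * (x l - z l) - (x l - y l) * (x j - z j)| := by
    intro j hj
    rw [hl]
    exact hdet j hj
  -- good-event measure bound, per strategy
  have hGood : ∀ v : Fin n → ℝ, (∀ t, ρ ≤ quantalResp n w c v t) →
      ENNReal.ofReal (1 - δ/3) ≤ sampleMeasure n m h0n w c v
        {s | ∀ j, |(cnt s j : ℝ) - m * quantalResp n w c v j|
          ≤ η * (m * quantalResp n w c v j)} := by
    intro v hv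
    rw [sampleMeasure_apply n m h0n w c v
      (fun s => ∀ j, |(cnt s j : ℝ) - m * quantalResp n w c v j|
        ≤ η * (m * quantalResp n w c v j))]
    apply ENNReal.ofReal_le_ofReal
    apply good_bound _ (qr_nonneg n w c v) (qr_sum_one n h0n w c v) m η (δ/3) hη0 hη12 h0n
    intro t
    have h1 : ρ ≤ quantalResp n w c v t := hv t
    have h2 : Real.exp (-((m:ℝ) * quantalResp n w c v t * η^2)/8)
        ≤ Real.exp (-((m:ℝ) * ρ * η^2)/8) := by
      apply Real.exp_le_exp.2
      have h3 : (m:ℝ) * ρ * η^2 ≤ (m:ℝ) * quantalResp n w c v t * η^2 := by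
        have h4 := mul_le_mul_of_nonneg_right
          (mul_le_mul_of_nonneg_left h1 (le_of_lt hmR)) (sq_nonneg η)
        linarith only [h4]
      linarith only [h3]
    have h3 : Real.exp (-((m:ℝ) * ρ * η^2)/8) ≤ δ/(6*n) := by
      have h4 : Real.exp (-((m:ℝ) * ρ * η^2)/8) ≤ Real.exp (- Real.log (6*(n:ℝ)/δ)) := by
        apply Real.exp_le_exp.2
        linarith only [hkey]
      rw [Real.exp_neg, Real.exp_log h6n] at h4
      have h5 : (6*(n:ℝ)/δ)⁻¹ = δ/(6*n) := by
        field_simp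
      rw [h5] at h4
      exact h4
    calc 2 * Real.exp (-((m:ℝ) * quantalResp n w c v t * η^2)/8)
        ≤ 2 * (δ/(6*n)) := by linarith only [h2, h3]
      _ = (δ/3)/n := by ring
  have hGx := hGood x hρx
  have hGy := hGood y hρy
  have hGz := hGood z hρz
  haveI hIx : IsProbabilityMeasure (sampleMeasure n m h0n w c x) := by
    unfold sampleMeasure; infer_instance
  haveI hIy : IsProbabilityMeasure (sampleMeasure n m h0n w c y) := by
    unfold sampleMeasure; infer_instance
  haveI hIz : IsProbabilityMeasure (sampleMeasure n m h0n w c z) := by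
    unfold sampleMeasure; infer_instance
  -- the product good event
  have hGprod : ENNReal.ofReal (1 - δ) ≤
      ((sampleMeasure n m h0n w c x).prod
        ((sampleMeasure n m h0n w c y).prod (sampleMeasure n m h0n w c z)))
      ({s | ∀ j, |(cnt s j : ℝ) - m * quantalResp n w c x j|
          ≤ η * (m * quantalResp n w c x j)} ×ˢ
        ({s | ∀ j, |(cnt s j : ℝ) - m * quantalResp n w c y j|
          ≤ η * (m * quantalResp n w c y j)} ×ˢ
         {s | ∀ j, |(cnt s j : ℝ) - m * quantalResp n w c z j|
          ≤ η * (m * quantalResp n w c z j)})) := by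
    rw [Measure.prod_prod, Measure.prod_prod]
    calc ENNReal.ofReal (1 - δ)
        ≤ ENNReal.ofReal ((1 - δ/3) * ((1 - δ/3) * (1 - δ/3))) :=
          ENNReal.ofReal_le_ofReal (by nlinarith only [hδ0, hδ1, sq_nonneg δ, mul_pos hδ0 hδ0])
      _ = ENNReal.ofReal (1 - δ/3) *
          (ENNReal.ofReal (1 - δ/3) * ENNReal.ofReal (1 - δ/3)) := by
          rw [ENNReal.ofReal_mul (by linarith only [hδ0, hδ1]),
            ENNReal.ofReal_mul (by linarith only [hδ0, hδ1])]
      _ ≤ _ := mul_le_mul' hGx (mul_le_mul' hGy hGz)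
  refine hGprod.trans (measure_mono ?_)
  -- deterministic part : on the good event the estimator succeeds
  rintro ⟨sx, syz⟩ ⟨hsx, hsyz⟩
  obtain ⟨sy, sz⟩ := syz
  obtain ⟨hsy, hsz⟩ := hsyz
  simp only [Set.mem_setOf_eq] at hsx hsy hsz
  refine ⟨0, ?_⟩
  intro t pp hpp
  obtain ⟨hpp0, hpp1⟩ := hpp
  -- log accuracy
  have hLog : ∀ (v : Fin n → ℝ) (s : Fin m → Fin n), (∀ t, ρ ≤ quantalResp n w c v t) →
      (∀ j, |(cnt s j : ℝ) - m * quantalResp n w c v j|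
        ≤ η * (m * quantalResp n w c v j)) →
      ∀ j, |Real.log ((cnt s j : ℝ)/m) - Real.log (quantalResp n w c v j)| ≤ 2*η := by
    intro v s hv hs j
    have hq : 0 < quantalResp n w c v j := lt_of_lt_of_le hρ0 (hv j)
    apply log_close hq hη0 hη12
    have e : (cnt s j : ℝ)/m - quantalResp n w c v j
        = ((cnt s j : ℝ) - m * quantalResp n w c v j)/m := by field_simp
    rw [e, abs_div, abs_of_pos hmR, div_le_iff₀ hmR]
    calc |(cnt s j : ℝ) - m * quantalResp n w c v j|
        ≤ η * ((m:ℝ) * quantalResp n w c v j) := hs j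
      _ = η * quantalResp n w c v j * m := by ring
  -- ratio accuracy
  have hLest : ∀ (v : Fin n → ℝ) (s : Fin m → Fin n), (∀ t, ρ ≤ quantalResp n w c v t) →
      (∀ j, |(cnt s j : ℝ) - m * quantalResp n w c v j|
        ≤ η * (m * quantalResp n w c v j)) →
      ∀ j, |Lest l s j - ((w j * v j + c j) - (w l * v l + c l))| ≤ 4*η := by
    intro v s hv hs j
    have h1 := hLog v s hv hs j
    have h2 := hLog v s hv hs l
    have e1 := qr_log n h0n w c v j
    have e2 := qr_log n h0n w c v l
    rcases abs_le.1 h1 with ⟨h1a, h1b⟩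
    rcases abs_le.1 h2 with ⟨h2a, h2b⟩
    unfold Lest
    rw [abs_le]
    constructor <;> linarith only [h1a, h1b, h2a, h2b, e1, e2]
  have hRx := hLest x sx hρx hsx
  have hRy := hLest y sy hρy hsy
  have hRz := hLest z sz hρz hsz
  -- accuracy of the linear-system data
  have hA : ∀ j, |(Lest l sx j - Lest l sy j)
      - (w j * (x j - y j) - w l * (x l - y l))| ≤ 8*η := by
    intro j
    rcases abs_le.1 (hRx j) with ⟨ha1, ha2⟩
    rcases abs_le.1 (hRy j) with ⟨hb1, hb2⟩
    rw [abs_le]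
    constructor <;> linarith only [ha1, ha2, hb1, hb2]
  have hB : ∀ j, |(Lest l sx j - Lest l sz j)
      - (w j * (x j - z j) - w l * (x l - z l))| ≤ 8*η := by
    intro j
    rcases abs_le.1 (hRx j) with ⟨ha1, ha2⟩
    rcases abs_le.1 (hRz j) with ⟨hb1, hb2⟩
    rw [abs_le]
    constructor <;> linarith only [ha1, ha2, hb1, hb2]
  -- coordinate bounds
  have hco : ∀ (u v : Fin n → ℝ), (∀ t, u t ∈ Set.Icc (0:ℝ) 1) →
      (∀ t, v t ∈ Set.Icc (0:ℝ) 1) → ∀ j, |u j - v j| ≤ 1 := by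
    intro u v hu hv j
    obtain ⟨hu0, hu1⟩ := hu j
    obtain ⟨hv0, hv1⟩ := hv j
    rw [abs_le]
    constructor <;> linarith only [hu0, hu1, hv0, hv1]
  -- slope estimates
  have h0t0 : (t0:ℕ) + 1 < n := by
    rw [ht0]
    show 0 + 1 < n
    omega
  have hWl : |estWl x y z l t0 sx sy sz - w l| ≤ 16*η/lam := by
    unfold estWl
    exact solve2_err (hdet' t0 h0t0) hlam0 (by ring) (hA t0) (hB t0)
      (hco x z hx hz t0) (hco x y hx hy t0) hη0.le
  -- final numeric bound
  have hfrac : η/lam = ε*ν/52 := by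
    rw [hηd]
    field_simp
  obtain ⟨A, hAd⟩ : ∃ a : ℝ, a = η/lam := ⟨_, rfl⟩
  have e16 : (16:ℝ)*η/lam = 16*A := by rw [hAd]; ring
  rw [e16] at hWl
  have hA0 : 0 ≤ A := by
    rw [hAd]
    positivity
  have hbig : 16*A + (4*η + 16*A + 16*A) ≤ ε := by
    have h1 : 4*η ≤ 4*A := by
      rw [hAd, show (4:ℝ)*(η/lam) = 4*η/lam by ring, le_div_iff₀ hlam0]
      nlinarith only [mul_nonneg hη0.le (sub_nonneg.2 hlam1.le)]
    have h2 : (52:ℝ)*A = ε*ν := by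
      rw [hAd, show (52:ℝ)*(η/lam) = 52*(η/lam) by ring, hfrac]
      ring
    have h3 : 0 ≤ ε * (1 - ν) := mul_nonneg hε0.le (sub_nonneg.2 hν1.le)
    linarith only [h1, h2, h3]
  by_cases hj : (t:ℕ) + 1 < n
  · have hWt : |estW x y z l sx sy sz t - w t| ≤ 16*η/lam := by
      unfold estW
      exact solve2_err (hdet' t hj) hlam0 (by ring) (hA t) (hB t)
        (hco x z hx hz l) (hco x y hx hy l) hη0.le
    rw [e16] at hWt
    simp only [estF, if_pos hj]
    have hdec : estW x y z l sx sy sz t * pp +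
        (Lest l sx t - estW x y z l sx sy sz t * x t + estWl x y z l t0 sx sy sz * x l)
        + 0 - (w t * pp + c t)
        = (estW x y z l sx sy sz t - w t) * pp
          + ((Lest l sx t - ((w t * x t + c t) - (w l * x l + c l)))
            - (estW x y z l sx sy sz t - w t) * x t
            + (estWl x y z l t0 sx sy sz - w l) * x l) := by
      rw [hc']; ring
    rw [hdec]
    have hb1 : |(estW x y z l sx sy sz t - w t) * pp| ≤ 16*A := by
      rw [abs_mul]
      calc |estW x y z l sx sy sz t - w t| * |pp| ≤ (16*A) * 1 :=
          mul_le_mul hWt (abs_le.2 ⟨by linarith only [hpp0], hpp1⟩) (abs_nonneg _) (by positivity)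
        _ = 16*A := by ring
    have hb2 : |(estW x y z l sx sy sz t - w t) * x t| ≤ 16*A := by
      obtain ⟨hxt0, hxt1⟩ := hx t
      rw [abs_mul]
      calc |estW x y z l sx sy sz t - w t| * |x t| ≤ (16*A) * 1 :=
          mul_le_mul hWt (abs_le.2 ⟨by linarith only [hxt0], hxt1⟩) (abs_nonneg _) (by positivity)
        _ = 16*A := by ring
    have hb3 : |(estWl x y z l t0 sx sy sz - w l) * x l| ≤ 16*A := by
      obtain ⟨hxl0, hxl1⟩ := hx l
      rw [abs_mul]
      calc |estWl x y z l t0 sx sy sz - w l| * |x l| ≤ (16*A) * 1 :=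
          mul_le_mul hWl (abs_le.2 ⟨by linarith only [hxl0], hxl1⟩) (abs_nonneg _) (by positivity)
        _ = 16*A := by ring
    have hb4 := hRx t
    rcases abs_le.1 hb1 with ⟨h1a, h1b⟩
    rcases abs_le.1 hb2 with ⟨h2a, h2b⟩
    rcases abs_le.1 hb3 with ⟨h3a, h3b⟩
    rcases abs_le.1 hb4 with ⟨h4a, h4b⟩
    rw [abs_le]
    constructor <;>
      linarith only [h1a, h1b, h2a, h2b, h3a, h3b, h4a, h4b, hbig]
  · have hval : (t:ℕ) = n - 1 := by
      have h2 := t.isLt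
      omega
    have htl : t = l := by
      rw [hl]
      exact Fin.ext hval
    rw [htl]
    have hnl : ¬ ((l:ℕ) + 1 < n) := by
      rw [hl]
      show ¬ (n - 1 + 1 < n)
      omega
    simp only [estF, if_neg hnl]
    have hdec : estWl x y z l t0 sx sy sz * pp + 0 + 0 - (w l * pp + c l)
        = (estWl x y z l t0 sx sy sz - w l) * pp := by
      rw [hc']; ring
    rw [hdec]
    rw [abs_mul]
    calc |estWl x y z l t0 sx sy sz - w l| * |pp| ≤ (16*A) * 1 :=
        mul_le_mul hWl (abs_le.2 ⟨by linarith only [hpp0], hpp1⟩) (abs_nonneg _) (by positivity)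
      _ ≤ ε := by
        have hp1 : 0 ≤ 4*η := by positivity
        linarith only [hbig, hp1, hA0]
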